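/- Fix q₀ ∈ U such that K(q₀) is invertible. Then the real directional derivatives of the first component z¹ of z at q₀ along both the radial vector q₀ and the vector i·q₀ (the generator of the Hopf circle action) vanish if and only if both of the following determinants are zero: the determinant of K(q₀) with its first column replaced by h(z(q₀)), and the determinant of K(q₀) with its first column replaced by q₀. -/

import Mathlib

open Matrix

theorem hopf_reduction_iff_det_vanishes
    /- Invariance of `z¹` along the radial direction `q₀` and the Hopf
       direction `i·q₀` is equivalent to the vanishing of both determinants:
       `det K(q₀)` with first column `h(z(q₀))`, and with first column `q₀`. -/
    (m : ℕ) (hm : 2 ≤ m)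
    (V : Set (Fin m → ℂ)) (hV : IsOpen V)
    (M : (Fin m → ℂ) → Matrix (Fin m) (Fin m) ℂ)
    (hM : ∀ i j, DifferentiableOn ℂ (fun ζ => M ζ i j) V)
    (hManti : ∀ ζ ∈ V, (M ζ)ᵀ = -(M ζ))
    (h : (Fin m → ℂ) → (Fin m → ℂ))
    (hh : ∀ i, DifferentiableOn ℂ (fun ζ => h ζ i) V)
    (F : (Fin m → ℂ) → (Fin m → ℂ) → (Fin m → ℂ))
    (hF : ∀ q ζ, F q ζ =
      fun i => q i - (∑ j, M ζ i j * (starRingEnd ℂ) (q j)) - h ζ i)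
    (U : Set (Fin m → ℂ)) (hU : IsOpen U)
    (z : (Fin m → ℂ) → (Fin m → ℂ))
    (hzV : ∀ q ∈ U, z q ∈ V)
    (hzF : ∀ q ∈ U, F q (z q) = 0)
    (hzdiff : DifferentiableOn ℝ z U)
    (K : (Fin m → ℂ) → Matrix (Fin m) (Fin m) ℂ)
    (hK : ∀ q ∈ U, ∀ i j, K q i j =
      fderiv ℂ (fun ζ => F q ζ i) (z q) (Pi.single j 1))
    (q₀ : Fin m → ℂ) (hq₀ : q₀ ∈ U)
    (hKinv : IsUnit (K q₀).det) :
    (fderiv ℝ (fun q => z q (⟨0, by omega⟩ : Fin m)) q₀ q₀ = 0 ∧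
     fderiv ℝ (fun q => z q (⟨0, by omega⟩ : Fin m)) q₀ (Complex.I • q₀) = 0) ↔
      ((Matrix.updateCol (K q₀) (⟨0, by omega⟩ : Fin m) (h (z q₀))).det = 0 ∧
       (Matrix.updateCol (K q₀) (⟨0, by omega⟩ : Fin m) q₀).det = 0) := by
  classical
  set e1 : Fin m := ⟨0, by omega⟩ with he1
  have hUq : U ∈ nhds q₀ := hU.mem_nhds hq₀
  have hzq : DifferentiableAt ℝ z q₀ := hzdiff.differentiableAt hUq
  set ζ₀ := z q₀ with hζ₀def
  have hζV : ζ₀ ∈ V := hzV q₀ hq₀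
  have hVζ : V ∈ nhds ζ₀ := hV.mem_nhds hζV
  have hMd : ∀ i j, DifferentiableAt ℂ (fun ζ => M ζ i j) ζ₀ :=
    fun i j => (hM i j).differentiableAt hVζ
  have hhd : ∀ i, DifferentiableAt ℂ (fun ζ => h ζ i) ζ₀ :=
    fun i => (hh i).differentiableAt hVζ
  set Dz := fderiv ℝ z q₀ with hDzdef
  set Dm : Fin m → Fin m → ((Fin m → ℂ) →L[ℂ] ℂ) :=
    fun i j => fderiv ℂ (fun ζ => M ζ i j) ζ₀ with hDmdef
  set Dh : Fin m → ((Fin m → ℂ) →L[ℂ] ℂ) :=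
    fun i => fderiv ℂ (fun ζ => h ζ i) ζ₀ with hDhdef
  -- evaluation of a C-linear functional via basis
  have hlin : ∀ (L : (Fin m → ℂ) →L[ℂ] ℂ) (w : Fin m → ℂ),
      L w = ∑ j, w j * L (Pi.single j 1) := by
    intro L w
    have hw : w = ∑ j, w j • (Pi.single j 1 : Fin m → ℂ) := by
      funext k; simp [Pi.single_apply]
    conv_lhs => rw [hw]
    rw [map_sum]; simp [smul_eq_mul]
  -- derivative of F q₀ in ζ
  have hKder : ∀ i, HasFDerivAt (fun ζ => F q₀ ζ i)
      ((0 - ∑ k, (starRingEnd ℂ) (q₀ k) • Dm i k) - Dh i) ζ₀ := by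
    intro i
    have hfun : (fun ζ => F q₀ ζ i)
        = fun ζ => q₀ i - (∑ k, M ζ i k * (starRingEnd ℂ) (q₀ k)) - h ζ i := by
      funext ζ; rw [hF]
    rw [hfun]
    exact ((hasFDerivAt_const (q₀ i) ζ₀).sub
      (HasFDerivAt.fun_sum fun k _ => (hMd i k).hasFDerivAt.mul_const _)).sub
      (hhd i).hasFDerivAt
  have hKval : ∀ i j, K q₀ i j =
      -(∑ k, (starRingEnd ℂ) (q₀ k) * Dm i k (Pi.single j 1)) - Dh i (Pi.single j 1) := by
    intro i j
    rw [hK q₀ hq₀ i j, ← hζ₀def, (hKder i).fderiv]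
    simp [smul_eq_mul]
  -- K times a vector
  have hKcomb : ∀ i (w : Fin m → ℂ), (K q₀ *ᵥ w) i
      = -(∑ k, (starRingEnd ℂ) (q₀ k) * Dm i k w) - Dh i w := by
    intro i w
    have h1 : (K q₀ *ᵥ w) i = ∑ j, K q₀ i j * w j := by
      simp [Matrix.mulVec, dotProduct]
    rw [h1]
    simp only [hKval, hlin (Dh i) w]
    have h2 : ∀ k, Dm i k w = ∑ j, w j * Dm i k (Pi.single j 1) := fun k => hlin _ _
    simp only [h2]
    simp only [sub_mul, neg_mul, Finset.sum_sub_distrib]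
    congr 1
    · rw [Finset.sum_neg_distrib, neg_inj]
      simp only [Finset.sum_mul, Finset.mul_sum]
      rw [Finset.sum_comm]
      exact Finset.sum_congr rfl fun j _ => Finset.sum_congr rfl fun k _ => by ring
    · exact Finset.sum_congr rfl fun j _ => by ring
  -- the key differentiated identity
  have hmain : ∀ v : Fin m → ℂ, ∀ i, (K q₀ *ᵥ Dz v) i
      = (∑ j, M ζ₀ i j * (starRingEnd ℂ) (v j)) - v i := by
    intro v i
    -- continuous linear maps used as derivatives
    set P : (Fin m → ℂ) →L[ℝ] ℂ :=
      ContinuousLinearMap.proj (R := ℝ) (φ := fun _ : Fin m => ℂ) i with hPdef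
    set C : Fin m → ((Fin m → ℂ) →L[ℝ] ℂ) := fun j =>
      (Complex.conjCLE.toContinuousLinearMap).comp
        (ContinuousLinearMap.proj (R := ℝ) (φ := fun _ : Fin m => ℂ) j) with hCdef
    have hP : HasFDerivAt (fun q : Fin m → ℂ => q i) P q₀ := P.hasFDerivAt
    have hC : ∀ j, HasFDerivAt (fun q : Fin m → ℂ => (starRingEnd ℂ) (q j)) (C j) q₀ := by
      intro j
      have := (C j).hasFDerivAt (x := q₀)
      exact this.congr_of_eventuallyEq (Filter.Eventually.of_forall fun q => rfl)
    have hMz : ∀ j, HasFDerivAt (fun q => M (z q) i j)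
        (((Dm i j).restrictScalars ℝ).comp Dz) q₀ :=
      fun j => HasFDerivAt.comp q₀ ((hMd i j).hasFDerivAt.restrictScalars ℝ) hzq.hasFDerivAt
    have hHz : HasFDerivAt (fun q => h (z q) i)
        (((Dh i).restrictScalars ℝ).comp Dz) q₀ :=
      HasFDerivAt.comp q₀ ((hhd i).hasFDerivAt.restrictScalars ℝ) hzq.hasFDerivAt
    set L : (Fin m → ℂ) →L[ℝ] ℂ :=
      (P - ∑ j, (M ζ₀ i j • C j
        + (starRingEnd ℂ) (q₀ j) • (((Dm i j).restrictScalars ℝ).comp Dz)))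
        - ((Dh i).restrictScalars ℝ).comp Dz with hLdef
    have hgD : HasFDerivAt
        (fun q => q i - (∑ j, M (z q) i j * (starRingEnd ℂ) (q j)) - h (z q) i) L q₀ :=
      (hP.sub (HasFDerivAt.fun_sum fun j _ => (hMz j).mul (hC j))).sub hHz
    have hev : (fun q => q i - (∑ j, M (z q) i j * (starRingEnd ℂ) (q j)) - h (z q) i)
        =ᶠ[nhds q₀] fun _ => (0 : ℂ) := by
      refine Filter.eventuallyEq_of_mem hUq fun q hq => ?_
      have := congrFun (hzF q hq) i
      rw [hF] at this
      simpa using this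
    have h0 : HasFDerivAt
        (fun q => q i - (∑ j, M (z q) i j * (starRingEnd ℂ) (q j)) - h (z q) i)
        (0 : (Fin m → ℂ) →L[ℝ] ℂ) q₀ :=
      (hasFDerivAt_const (0 : ℂ) q₀).congr_of_eventuallyEq hev
    have hL0 : L = 0 := hgD.unique h0
    have hLv := congrArg (fun (T : (Fin m → ℂ) →L[ℝ] ℂ) => T v) hL0
    simp only [hLdef, ContinuousLinearMap.sub_apply, ContinuousLinearMap.sum_apply,
      ContinuousLinearMap.add_apply, ContinuousLinearMap.smul_apply,
      ContinuousLinearMap.comp_apply, ContinuousLinearMap.coe_restrictScalars',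
      ContinuousLinearMap.zero_apply, smul_eq_mul, hPdef, hCdef,
      ContinuousLinearMap.proj_apply, ContinuousLinearEquiv.coe_coe,
      Complex.conjCLE_apply] at hLv
    -- hLv : v i - ∑ j, (M ζ₀ i j * conj (v j) + conj (q₀ j) * Dm i j (Dz v)) - Dh i (Dz v) = 0
    rw [hKcomb i (Dz v)]
    rw [Finset.sum_add_distrib] at hLv
    linear_combination hLv
  -- base identity
  have hbase : ∀ i, ∑ j, M ζ₀ i j * (starRingEnd ℂ) (q₀ j) = q₀ i - h ζ₀ i := by
    intro i
    have := congrFun (hzF q₀ hq₀) i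
    rw [hF] at this
    simp only [Pi.zero_apply] at this
    rw [← hζ₀def] at this
    linear_combination -this
  have hEq1 : K q₀ *ᵥ Dz q₀ = fun i => -(h ζ₀ i) := by
    funext i
    rw [hmain q₀ i, hbase i]
    ring
  have hEq2 : K q₀ *ᵥ Dz (Complex.I • q₀)
      = fun i => Complex.I * h ζ₀ i - (2 * Complex.I) * q₀ i := by
    funext i
    rw [hmain (Complex.I • q₀) i]
    have hs : ∑ j, M ζ₀ i j * (starRingEnd ℂ) ((Complex.I • q₀) j)
        = -Complex.I * ∑ j, M ζ₀ i j * (starRingEnd ℂ) (q₀ j) := by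
      rw [Finset.mul_sum]
      refine Finset.sum_congr rfl fun j _ => ?_
      have : (Complex.I • q₀) j = Complex.I * q₀ j := rfl
      rw [this, _root_.map_mul, Complex.conj_I]
      ring
    rw [hs, hbase i]
    simp only [Pi.smul_apply, smul_eq_mul]
    ring
  -- Cramer step
  have hcram : ∀ (w b : Fin m → ℂ), K q₀ *ᵥ w = b →
      (K q₀).det * w e1 = ((K q₀).updateCol e1 b).det := by
    intro w b hwb
    have h1 : cramer (K q₀) b = (K q₀).det • w := by
      rw [← hwb, cramer_eq_adjugate_mulVec, mulVec_mulVec, adjugate_mul,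
        smul_mulVec, one_mulVec]
    have h2 := congrFun h1 e1
    rw [cramer_apply] at h2
    simpa [smul_eq_mul, eq_comm] using h2
  -- component derivative
  have hfd : ∀ v : Fin m → ℂ, fderiv ℝ (fun q => z q e1) q₀ v = Dz v e1 := by
    intro v
    have hp : DifferentiableAt ℝ (fun w : Fin m → ℂ => w e1) ζ₀ :=
      (ContinuousLinearMap.proj (R := ℝ) (φ := fun _ : Fin m => ℂ) e1).differentiableAt
    have hc := fderiv_comp (𝕜 := ℝ) q₀ hp hzq
    rw [show ((fun w : Fin m → ℂ => w e1) ∘ z) = fun q => z q e1 from rfl] at hc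
    rw [hc]
    have h2 : fderiv ℝ (fun w : Fin m → ℂ => w e1) ζ₀ =
        ContinuousLinearMap.proj (R := ℝ) (φ := fun _ : Fin m => ℂ) e1 :=
      by exact (ContinuousLinearMap.proj (R := ℝ) (φ := fun _ : Fin m => ℂ) e1).fderiv
    rw [h2]; rfl
  -- determinants
  have hD1 : (K q₀).det * Dz q₀ e1 = -((K q₀).updateCol e1 (h ζ₀)).det := by
    rw [hcram _ _ hEq1]
    have : (fun i => -(h ζ₀ i)) = (-1 : ℂ) • (h ζ₀) := by funext i; simp
    rw [this, det_updateCol_smul]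
    ring
  have hD2 : (K q₀).det * Dz (Complex.I • q₀) e1
      = Complex.I * ((K q₀).updateCol e1 (h ζ₀)).det
        - (2 * Complex.I) * ((K q₀).updateCol e1 q₀).det := by
    rw [hcram _ _ hEq2]
    have : (fun i => Complex.I * h ζ₀ i - (2 * Complex.I) * q₀ i)
        = (Complex.I • (h ζ₀)) + ((-(2 * Complex.I)) • q₀) := by
      funext i
      simp only [Pi.add_apply, Pi.smul_apply, smul_eq_mul]
      ring
    rw [this, det_updateCol_add, det_updateCol_smul, det_updateCol_smul]
    ring
  -- finish
  obtain ⟨d, hd⟩ := hKinv.exists_left_inv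
  show (fderiv ℝ (fun q => z q e1) q₀ q₀ = 0 ∧
      fderiv ℝ (fun q => z q e1) q₀ (Complex.I • q₀) = 0) ↔
      (((K q₀).updateCol e1 (h ζ₀)).det = 0 ∧ ((K q₀).updateCol e1 q₀).det = 0)
  rw [hfd, hfd]
  constructor
  · rintro ⟨h1, h2⟩
    rw [h1, mul_zero] at hD1
    rw [h2, mul_zero] at hD2
    have hh0 : ((K q₀).updateCol e1 (h ζ₀)).det = 0 := by linear_combination hD1
    refine ⟨hh0, ?_⟩
    rw [hh0] at hD2
    have h2I : (2 * Complex.I) ≠ 0 := by simp [Complex.I_ne_zero]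
    have h3 : (2 * Complex.I) * ((K q₀).updateCol e1 q₀).det = 0 := by
      linear_combination hD2
    exact (mul_eq_zero.mp h3).resolve_left h2I
  · rintro ⟨h1, h2⟩
    rw [h1] at hD1 hD2
    rw [h2] at hD2
    constructor
    · have : (K q₀).det * Dz q₀ e1 = 0 := by rw [hD1]; ring
      have := mul_eq_zero.mp this
      rcases this with h' | h'
      · exact absurd h' (IsUnit.ne_zero hKinv)
      · exact h'
    · have : (K q₀).det * Dz (Complex.I • q₀) e1 = 0 := by rw [hD2]; ring
      rcases mul_eq_zero.mp this with h' | h'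
      · exact absurd h' (IsUnit.ne_zero hKinv)
      · exact h'
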